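/- arXiv:0803.1612 — 4 statements merged into one kernel-verified Lean document; each statement's English description precedes it below -/
import Mathlib

section
/- The 2×2 matrices A = [[1, 2], [0, 1]] and B = [[1, 0], [2, 1]] over the integers generate a free group of rank 2. -/
open Matrix

abbrev SanovM := Matrix (Fin 2) (Fin 2) ℤ

/-- Nonzero integer vectors of length two. -/
def SanovV := {v : Fin 2 → ℤ // v ≠ 0}

instance : MulAction (SanovM)ˣ SanovV where
  smul u v := ⟨(u : SanovM).mulVec v.1, by
    intro h
    apply v.2
    have h2 := congrArg (fun w => ((u⁻¹ : SanovMˣ) : SanovM).mulVec w) h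
    simpa only [Matrix.mulVec_mulVec, ← Units.val_mul, inv_mul_cancel, Units.val_one,
      Matrix.one_mulVec, Matrix.mulVec_zero] using h2⟩
  one_smul v := Subtype.ext (by simp [HSMul.hSMul, SMul.smul])
  mul_smul u₁ u₂ v := Subtype.ext (by
    show ((u₁ * u₂ : SanovMˣ) : SanovM).mulVec v.1 = (u₁ : SanovM).mulVec ((u₂ : SanovM).mulVec v.1)
    rw [Units.val_mul, Matrix.mulVec_mulVec])

lemma SanovV.smul_val (u : SanovMˣ) (v : SanovV) :
    (u • v).1 = (u : SanovM).mulVec v.1 := rfl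

/-- Same signs (weakly), `|x| ≥ |y|`. -/
def sanovXA : Set SanovV := {v | (0 ≤ v.1 1 ∧ v.1 1 ≤ v.1 0) ∨ (v.1 0 ≤ v.1 1 ∧ v.1 1 ≤ 0)}
/-- Same signs (weakly), `|y| > |x|`. -/
def sanovXB : Set SanovV := {v | (0 ≤ v.1 0 ∧ v.1 0 < v.1 1) ∨ (v.1 1 < v.1 0 ∧ v.1 0 ≤ 0)}
/-- Opposite signs (strictly), `|x| > |y|`. -/
def sanovYA : Set SanovV := {v | (v.1 1 < 0 ∧ -(v.1 1) < v.1 0) ∨ (0 < v.1 1 ∧ v.1 0 < -(v.1 1))}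
/-- Opposite signs (strictly), `|y| ≥ |x|`. -/
def sanovYB : Set SanovV := {v | (0 < v.1 0 ∧ v.1 1 ≤ -(v.1 0)) ∨ (v.1 0 < 0 ∧ -(v.1 0) ≤ v.1 1)}

lemma sanovV_ne (v : SanovV) : v.1 0 ≠ 0 ∨ v.1 1 ≠ 0 := by
  by_contra h
  push_neg at h
  apply v.2
  funext i
  fin_cases i
  · exact h.1
  · exact h.2

/-- **Sanov's theorem.** The matrices `A = [[1,2],[0,1]]` and `B = [[1,0],[2,1]]` over `ℤ`
generate a free group of rank 2: the homomorphism from the free group on two generators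
sending the generators to `A` and `B` is injective. -/
theorem sanov_free_of_rank_two
    (A B : (Matrix (Fin 2) (Fin 2) ℤ)ˣ)
    (hA : (A : Matrix (Fin 2) (Fin 2) ℤ) = !![1, 2; 0, 1])
    (hB : (B : Matrix (Fin 2) (Fin 2) ℤ) = !![1, 0; 2, 1]) :
    Function.Injective ⇑(FreeGroup.lift (fun b : Bool => if b then A else B)) := by
  have hA' : ((A⁻¹ : SanovMˣ) : SanovM) = !![1, -2; 0, 1] := by
    have h : (A : SanovM) * !![1, -2; 0, 1] = 1 := by
      rw [hA]
      norm_num [Matrix.mul_fin_two]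
      exact Matrix.one_fin_two.symm
    calc ((A⁻¹ : SanovMˣ) : SanovM) = ↑A⁻¹ * ((A : SanovM) * !![1, -2; 0, 1]) := by
          rw [h, mul_one]
      _ = (((A⁻¹ * A : SanovMˣ)) : SanovM) * !![1, -2; 0, 1] := by
          rw [Units.val_mul, mul_assoc]
      _ = !![1, -2; 0, 1] := by rw [inv_mul_cancel]; simp
  have hB' : ((B⁻¹ : SanovMˣ) : SanovM) = !![1, 0; -2, 1] := by
    have h : (B : SanovM) * !![1, 0; -2, 1] = 1 := by
      rw [hB]
      norm_num [Matrix.mul_fin_two]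
      exact Matrix.one_fin_two.symm
    calc ((B⁻¹ : SanovMˣ) : SanovM) = ↑B⁻¹ * ((B : SanovM) * !![1, 0; -2, 1]) := by
          rw [h, mul_one]
      _ = (((B⁻¹ * B : SanovMˣ)) : SanovM) * !![1, 0; -2, 1] := by
          rw [Units.val_mul, mul_assoc]
      _ = !![1, 0; -2, 1] := by rw [inv_mul_cancel]; simp
  have mulVec_A : ∀ w : Fin 2 → ℤ, (A : SanovM).mulVec w = ![w 0 + 2 * w 1, w 1] := by
    intro w
    funext i
    fin_cases i <;>
      simp [hA, Matrix.mulVec, dotProduct, Fin.sum_univ_two] <;> ring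
  have mulVec_A' : ∀ w : Fin 2 → ℤ, ((A⁻¹ : SanovMˣ) : SanovM).mulVec w = ![w 0 - 2 * w 1, w 1] := by
    intro w
    funext i
    fin_cases i <;>
      simp [hA', Matrix.mulVec, dotProduct, Fin.sum_univ_two] <;> ring
  have mulVec_B : ∀ w : Fin 2 → ℤ, (B : SanovM).mulVec w = ![w 0, 2 * w 0 + w 1] := by
    intro w
    funext i
    fin_cases i <;>
      simp [hB, Matrix.mulVec, dotProduct, Fin.sum_univ_two] <;> ring
  have mulVec_B' : ∀ w : Fin 2 → ℤ, ((B⁻¹ : SanovMˣ) : SanovM).mulVec w = ![w 0, -2 * w 0 + w 1] := by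
    intro w
    funext i
    fin_cases i <;>
      simp [hB', Matrix.mulVec, dotProduct, Fin.sum_univ_two] <;> ring
  apply FreeGroup.injective_lift_of_ping_pong _
    (fun b => if b then sanovXA else sanovXB) (fun b => if b then sanovYA else sanovYB)
  · -- nonempty
    intro i
    cases i
    · refine ⟨⟨![0, 1], fun h => by simpa using congrFun h 1⟩, Or.inl ?_⟩
      constructor <;> norm_num
    · refine ⟨⟨![1, 0], fun h => by simpa using congrFun h 0⟩, Or.inl ?_⟩
      constructor <;> norm_num
  · -- X pairwise disjoint
    have key : Disjoint sanovXA sanovXB := by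
      rw [Set.disjoint_left]
      intro v h1 h2
      have p1 : (0 ≤ v.1 1 ∧ v.1 1 ≤ v.1 0) ∨ (v.1 0 ≤ v.1 1 ∧ v.1 1 ≤ 0) := h1
      have p2 : (0 ≤ v.1 0 ∧ v.1 0 < v.1 1) ∨ (v.1 1 < v.1 0 ∧ v.1 0 ≤ 0) := h2
      omega
    intro i j hij
    cases i <;> cases j <;> first | exact absurd rfl hij | exact key | exact key.symm
  · -- Y pairwise disjoint
    have key : Disjoint sanovYA sanovYB := by
      rw [Set.disjoint_left]
      intro v h1 h2
      have p1 : (v.1 1 < 0 ∧ -(v.1 1) < v.1 0) ∨ (0 < v.1 1 ∧ v.1 0 < -(v.1 1)) := h1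
      have p2 : (0 < v.1 0 ∧ v.1 1 ≤ -(v.1 0)) ∨ (v.1 0 < 0 ∧ -(v.1 0) ≤ v.1 1) := h2
      omega
    intro i j hij
    cases i <;> cases j <;> first | exact absurd rfl hij | exact key | exact key.symm
  · -- X i disjoint from Y j
    intro i j
    cases i <;> cases j <;> rw [Set.disjoint_left] <;> intro v h1 h2
    · have p1 : (0 ≤ v.1 0 ∧ v.1 0 < v.1 1) ∨ (v.1 1 < v.1 0 ∧ v.1 0 ≤ 0) := h1
      have p2 : (0 < v.1 0 ∧ v.1 1 ≤ -(v.1 0)) ∨ (v.1 0 < 0 ∧ -(v.1 0) ≤ v.1 1) := h2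
      omega
    · have p1 : (0 ≤ v.1 0 ∧ v.1 0 < v.1 1) ∨ (v.1 1 < v.1 0 ∧ v.1 0 ≤ 0) := h1
      have p2 : (v.1 1 < 0 ∧ -(v.1 1) < v.1 0) ∨ (0 < v.1 1 ∧ v.1 0 < -(v.1 1)) := h2
      omega
    · have p1 : (0 ≤ v.1 1 ∧ v.1 1 ≤ v.1 0) ∨ (v.1 0 ≤ v.1 1 ∧ v.1 1 ≤ 0) := h1
      have p2 : (0 < v.1 0 ∧ v.1 1 ≤ -(v.1 0)) ∨ (v.1 0 < 0 ∧ -(v.1 0) ≤ v.1 1) := h2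
      have := sanovV_ne v
      omega
    · have p1 : (0 ≤ v.1 1 ∧ v.1 1 ≤ v.1 0) ∨ (v.1 0 ≤ v.1 1 ∧ v.1 1 ≤ 0) := h1
      have p2 : (v.1 1 < 0 ∧ -(v.1 1) < v.1 0) ∨ (0 < v.1 1 ∧ v.1 0 < -(v.1 1)) := h2
      omega
  · -- forward inclusions
    intro i z hz
    rw [Set.mem_smul_set] at hz
    obtain ⟨w, hw, rfl⟩ := hz
    have hw0 := sanovV_ne w
    cases i
    · -- B maps (sanovYB)ᶜ into sanovXB
      have hw1 : ¬((0 < w.1 0 ∧ w.1 1 ≤ -(w.1 0)) ∨ (w.1 0 < 0 ∧ -(w.1 0) ≤ w.1 1)) := hw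
      show ((B : SanovMˣ) • w) ∈ sanovXB
      have hv : ((B : SanovMˣ) • w).1 = ![w.1 0, 2 * w.1 0 + w.1 1] := by
        rw [SanovV.smul_val, mulVec_B]
      show (0 ≤ ((B : SanovMˣ) • w).1 0 ∧ ((B : SanovMˣ) • w).1 0 < ((B : SanovMˣ) • w).1 1) ∨
        (((B : SanovMˣ) • w).1 1 < ((B : SanovMˣ) • w).1 0 ∧ ((B : SanovMˣ) • w).1 0 ≤ 0)
      rw [hv]
      simp only [Matrix.cons_val_zero, Matrix.cons_val_one, Matrix.head_cons]
      omega
    · -- A maps (sanovYA)ᶜ into sanovXA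
      have hw1 : ¬((w.1 1 < 0 ∧ -(w.1 1) < w.1 0) ∨ (0 < w.1 1 ∧ w.1 0 < -(w.1 1))) := hw
      show ((A : SanovMˣ) • w) ∈ sanovXA
      have hv : ((A : SanovMˣ) • w).1 = ![w.1 0 + 2 * w.1 1, w.1 1] := by
        rw [SanovV.smul_val, mulVec_A]
      show (0 ≤ ((A : SanovMˣ) • w).1 1 ∧ ((A : SanovMˣ) • w).1 1 ≤ ((A : SanovMˣ) • w).1 0) ∨
        (((A : SanovMˣ) • w).1 0 ≤ ((A : SanovMˣ) • w).1 1 ∧ ((A : SanovMˣ) • w).1 1 ≤ 0)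
      rw [hv]
      simp only [Matrix.cons_val_zero, Matrix.cons_val_one, Matrix.head_cons]
      omega
  · -- backward inclusions
    intro i z hz
    rw [Set.mem_smul_set] at hz
    obtain ⟨w, hw, rfl⟩ := hz
    have hw0 := sanovV_ne w
    cases i
    · -- B⁻¹ maps (sanovXB)ᶜ into sanovYB
      have hw1 : ¬((0 ≤ w.1 0 ∧ w.1 0 < w.1 1) ∨ (w.1 1 < w.1 0 ∧ w.1 0 ≤ 0)) := hw
      show ((B⁻¹ : SanovMˣ) • w) ∈ sanovYB
      have hv : ((B⁻¹ : SanovMˣ) • w).1 = ![w.1 0, -2 * w.1 0 + w.1 1] := by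
        rw [SanovV.smul_val, mulVec_B']
      show (0 < ((B⁻¹ : SanovMˣ) • w).1 0 ∧
          ((B⁻¹ : SanovMˣ) • w).1 1 ≤ -(((B⁻¹ : SanovMˣ) • w).1 0)) ∨
        (((B⁻¹ : SanovMˣ) • w).1 0 < 0 ∧
          -(((B⁻¹ : SanovMˣ) • w).1 0) ≤ ((B⁻¹ : SanovMˣ) • w).1 1)
      rw [hv]
      simp only [Matrix.cons_val_zero, Matrix.cons_val_one, Matrix.head_cons]
      omega
    · -- A⁻¹ maps (sanovXA)ᶜ into sanovYA
      have hw1 : ¬((0 ≤ w.1 1 ∧ w.1 1 ≤ w.1 0) ∨ (w.1 0 ≤ w.1 1 ∧ w.1 1 ≤ 0)) := hw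
      show ((A⁻¹ : SanovMˣ) • w) ∈ sanovYA
      have hv : ((A⁻¹ : SanovMˣ) • w).1 = ![w.1 0 - 2 * w.1 1, w.1 1] := by
        rw [SanovV.smul_val, mulVec_A']
      show (((A⁻¹ : SanovMˣ) • w).1 1 < 0 ∧
          -(((A⁻¹ : SanovMˣ) • w).1 1) < ((A⁻¹ : SanovMˣ) • w).1 0) ∨
        (0 < ((A⁻¹ : SanovMˣ) • w).1 1 ∧
          ((A⁻¹ : SanovMˣ) • w).1 0 < -(((A⁻¹ : SanovMˣ) • w).1 1))
      rw [hv]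
      simp only [Matrix.cons_val_zero, Matrix.cons_val_one, Matrix.head_cons]
      omega
end

section
/- Every element M of the group F(ℛ) generated by M₁ and M₂ has the form M = uI + N, where u is a unit of ℛ of the form x^i y^j, and N is the 2×2 matrix with first row λ₁·(1-x, 1-y) and second row λ₂·(1-x, 1-y) for some λ₁, λ₂ ∈ ℛ satisfying λ₁(1-x) + λ₂(1-y) = 1 - u. -/
open Matrix Finset

noncomputable section

/-- The Laurent polynomial ring `ℛ = ℤ[x, x⁻¹, y, y⁻¹]`, realized as the group
algebra of `ℤ × ℤ` over `ℤ`. -/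
abbrev R2 : Type := AddMonoidAlgebra ℤ (ℤ × ℤ)

/-- The positive units `x^i y^j` of `ℛ`, as a homomorphism from `ℤ × ℤ`. -/
def U : Multiplicative (ℤ × ℤ) →* R2ˣ :=
  (Units.map (AddMonoidAlgebra.of ℤ (ℤ × ℤ))).comp toUnits.toMonoidHom

/-- `x` as a unit of `ℛ`. -/
def xu : R2ˣ := U (Multiplicative.ofAdd (1, 0))
/-- `y` as a unit of `ℛ`. -/
def yu : R2ˣ := U (Multiplicative.ofAdd (0, 1))
/-- `x ∈ ℛ`. -/
def Xr : R2 := xu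
/-- `y ∈ ℛ`. -/
def Yr : R2 := yu

/-- The augmentation map `ℛ → ℤ`, `x, y ↦ 1`. -/
def aug : R2 →+* ℤ := ((AddMonoidAlgebra.lift ℤ ℤ (ℤ × ℤ)) 1).toRingHom

/-- The augmentation ideal `Σ` of `ℛ`. -/
def Saug : Ideal R2 := RingHom.ker aug

/-- The `n`-cyclotomic ideal `𝒥(n)` of `ℛ`, generated by `1 + u + ⋯ + u^(n-1)` for
positive units `u`. -/
def Cyc (n : ℕ) : Ideal R2 :=
  Ideal.span {r | ∃ m : Multiplicative (ℤ × ℤ), r = ∑ i ∈ Finset.range n, ((U m : R2)) ^ i}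

/-- The matrix `M₁`. -/
def M1 : Matrix (Fin 2) (Fin 2) R2 := !![1, 1 - Yr; 0, Xr]
/-- The matrix `M₂`. -/
def M2 : Matrix (Fin 2) (Fin 2) R2 := !![Yr, 0; 1 - Xr, 1]

/-- The matrix `[λᵢ v]` with rows `λᵢ • (1-x, 1-y)`. -/
def Nmat (a b : R2) : Matrix (Fin 2) (Fin 2) R2 :=
  !![a * (1 - Xr), a * (1 - Yr); b * (1 - Xr), b * (1 - Yr)]

/-- The row vector `v = (1-x, 1-y)`. -/
def vv : Fin 2 → R2 := ![1 - Xr, 1 - Yr]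

end

section Aux

private lemma form_mul (u v : R2ˣ) (a b a' b' : R2)
    (h' : a' * (1 - Xr) + b' * (1 - Yr) = 1 - (v : R2)) :
    ((u : R2) • (1 : Matrix (Fin 2) (Fin 2) R2) + Nmat a b) *
      ((v : R2) • (1 : Matrix (Fin 2) (Fin 2) R2) + Nmat a' b')
      = ((u * v : R2ˣ) : R2) • (1 : Matrix (Fin 2) (Fin 2) R2)
        + Nmat (a + (u : R2) * a') (b + (u : R2) * b') := by
  refine Matrix.ext fun i j => ?_
  fin_cases i <;> fin_cases j <;>
    simp [Nmat, Matrix.mul_apply, Fin.sum_univ_two, Matrix.one_apply, Units.val_mul] <;>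
    first
      | linear_combination (a * (1 - Xr)) * h'
      | linear_combination (a * (1 - Yr)) * h'
      | linear_combination (b * (1 - Xr)) * h'
      | linear_combination (b * (1 - Yr)) * h'

private lemma form_inv (u : R2ˣ) (a b : R2)
    (h : a * (1 - Xr) + b * (1 - Yr) = 1 - (u : R2)) :
    (((u⁻¹ : R2ˣ) : R2) • (1 : Matrix (Fin 2) (Fin 2) R2)
        + Nmat (-((u⁻¹ : R2ˣ) : R2) * a) (-((u⁻¹ : R2ˣ) : R2) * b)) *
      ((u : R2) • (1 : Matrix (Fin 2) (Fin 2) R2) + Nmat a b) = 1 := by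
  have hu : ((u⁻¹ : R2ˣ) : R2) * (u : R2) = 1 := u.inv_mul
  refine Matrix.ext fun i j => ?_
  fin_cases i <;> fin_cases j <;>
    simp [Nmat, Matrix.mul_apply, Fin.sum_univ_two, Matrix.one_apply] <;>
    first
      | linear_combination hu - (((u⁻¹ : R2ˣ) : R2) * a * (1 - Xr)) * h
      | linear_combination -(((u⁻¹ : R2ˣ) : R2) * a * (1 - Yr)) * h
      | linear_combination -(((u⁻¹ : R2ˣ) : R2) * b * (1 - Xr)) * h
      | linear_combination hu - (((u⁻¹ : R2ˣ) : R2) * b * (1 - Yr)) * h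

end Aux

/-- Every element `M` of `F(ℛ) = ⟨M₁, M₂⟩` has the form `M = uI + N` with `u = x^i y^j`
a positive unit and `N = [λᵢ v]`, where `λ₁(1-x) + λ₂(1-y) = 1 - u`. -/
theorem normal_form
    (m1 m2 : (Matrix (Fin 2) (Fin 2) R2)ˣ)
    (h1 : (m1 : Matrix (Fin 2) (Fin 2) R2) = M1)
    (h2 : (m2 : Matrix (Fin 2) (Fin 2) R2) = M2) :
    ∀ M ∈ Subgroup.closure {m1, m2}, ∃ (i j : ℤ) (l1 l2 : R2),
      (M : Matrix (Fin 2) (Fin 2) R2) =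
        ((xu ^ i * yu ^ j : R2ˣ) : R2) • (1 : Matrix (Fin 2) (Fin 2) R2) + Nmat l1 l2 ∧
      l1 * (1 - Xr) + l2 * (1 - Yr) = 1 - ((xu ^ i * yu ^ j : R2ˣ) : R2) := by
  intro M hM
  induction hM using Subgroup.closure_induction with
  | mem x hx =>
    rcases hx with hx | hx
    · refine ⟨1, 0, 1, 0, ?_, ?_⟩
      · subst hx; rw [h1]
        refine Matrix.ext fun i j => ?_
        fin_cases i <;> fin_cases j <;>
          simp [M1, Nmat, Matrix.one_apply, Xr]
      · simp [Xr]
    · refine ⟨0, 1, 0, 1, ?_, ?_⟩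
      · simp only [Set.mem_singleton_iff] at hx
        subst hx; rw [h2]
        refine Matrix.ext fun i j => ?_
        fin_cases i <;> fin_cases j <;>
          simp [M2, Nmat, Matrix.one_apply, Yr]
      · simp [Yr]
  | one =>
    refine ⟨0, 0, 0, 0, ?_, ?_⟩
    · refine Matrix.ext fun i j => ?_
      fin_cases i <;> fin_cases j <;> simp [Nmat, Matrix.one_apply]
    · simp
  | mul x y hx hy ihx ihy =>
    obtain ⟨i, j, a, b, hxe, hxc⟩ := ihx
    obtain ⟨i', j', a', b', hye, hyc⟩ := ihy
    refine ⟨i + i', j + j', a + ((xu ^ i * yu ^ j : R2ˣ) : R2) * a',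
      b + ((xu ^ i * yu ^ j : R2ˣ) : R2) * b', ?_, ?_⟩
    · have huu : (xu ^ (i + i') * yu ^ (j + j') : R2ˣ)
          = (xu ^ i * yu ^ j) * (xu ^ i' * yu ^ j') := by
        rw [_root_.zpow_add, _root_.zpow_add, mul_mul_mul_comm]
      rw [Units.val_mul, hxe, hye, huu,
        form_mul (xu ^ i * yu ^ j) (xu ^ i' * yu ^ j') a b a' b' hyc]
    · have huu : ((xu ^ (i + i') * yu ^ (j + j') : R2ˣ) : R2)
          = ((xu ^ i * yu ^ j : R2ˣ) : R2) * ((xu ^ i' * yu ^ j' : R2ˣ) : R2) := by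
        rw [← Units.val_mul, _root_.zpow_add, _root_.zpow_add, mul_mul_mul_comm]
      rw [huu]
      linear_combination hxc + ((xu ^ i * yu ^ j : R2ˣ) : R2) * hyc
  | inv x hx ihx =>
    obtain ⟨i, j, a, b, hxe, hxc⟩ := ihx
    set u : R2ˣ := xu ^ i * yu ^ j with hu
    have huinv : (xu ^ (-i) * yu ^ (-j) : R2ˣ) = u⁻¹ := by
      rw [hu, mul_inv, _root_.zpow_neg, _root_.zpow_neg]
    have hCx : (((u⁻¹ : R2ˣ) : R2) • (1 : Matrix (Fin 2) (Fin 2) R2)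
        + Nmat (-((u⁻¹ : R2ˣ) : R2) * a) (-((u⁻¹ : R2ˣ) : R2) * b)) *
        (x : Matrix (Fin 2) (Fin 2) R2) = 1 := by
      rw [hxe]; exact form_inv u a b hxc
    refine ⟨-i, -j, -((u⁻¹ : R2ˣ) : R2) * a, -((u⁻¹ : R2ˣ) : R2) * b, ?_, ?_⟩
    · rw [huinv]
      calc (↑x⁻¹ : Matrix (Fin 2) (Fin 2) R2)
          = 1 * ↑x⁻¹ := (one_mul _).symm
        _ = ((((u⁻¹ : R2ˣ) : R2) • (1 : Matrix (Fin 2) (Fin 2) R2)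
              + Nmat (-((u⁻¹ : R2ˣ) : R2) * a) (-((u⁻¹ : R2ˣ) : R2) * b)) * ↑x) * ↑x⁻¹ := by
            rw [hCx]
        _ = (((u⁻¹ : R2ˣ) : R2) • (1 : Matrix (Fin 2) (Fin 2) R2)
              + Nmat (-((u⁻¹ : R2ˣ) : R2) * a) (-((u⁻¹ : R2ˣ) : R2) * b)) * (↑x * ↑x⁻¹) := by
            rw [mul_assoc]
        _ = _ := by rw [← Units.val_mul, mul_inv_cancel, Units.val_one, mul_one]
    · rw [huinv]
      have hui : ((u⁻¹ : R2ˣ) : R2) * (u : R2) = 1 := u.inv_mul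
      linear_combination -((u⁻¹ : R2ˣ) : R2) * hxc + hui
end

section
/- If M = uI + N lies in the commutator subgroup of F(ℛ), then u = 1 and λ₁(1-x) + λ₂(1-y) = 0, where N has rows λᵢ·(1-x, 1-y); consequently λ₁ and λ₂ both lie in the augmentation ideal Σ of ℛ. -/
open Matrix Finset

section Aux

open AddMonoidAlgebra

lemma Xr_def : Xr = AddMonoidAlgebra.single ((1:ℤ),(0:ℤ)) 1 := by
  simp [Xr, xu, U, AddMonoidAlgebra.of_apply]

lemma Yr_def : Yr = AddMonoidAlgebra.single ((0:ℤ),(1:ℤ)) 1 := by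
  simp [Yr, yu, U, AddMonoidAlgebra.of_apply]

lemma Xr_ne_one : Xr ≠ 1 := by
  rw [Xr_def, AddMonoidAlgebra.one_def]
  intro h
  have := AddMonoidAlgebra.single_inj.mp h
  simp at this

lemma Yr_ne_one : Yr ≠ 1 := by
  rw [Yr_def, AddMonoidAlgebra.one_def]
  intro h
  have := AddMonoidAlgebra.single_inj.mp h
  simp at this

lemma one_sub_Xr_ne : (1 - Xr : R2) ≠ 0 := sub_ne_zero.mpr (Ne.symm Xr_ne_one)
lemma one_sub_Yr_ne : (1 - Yr : R2) ≠ 0 := sub_ne_zero.mpr (Ne.symm Yr_ne_one)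

lemma vecMul_M1 : vv ᵥ* M1 = vv := by
  funext j
  fin_cases j <;>
    (simp [vv, M1, Matrix.vecMul, dotProduct, Fin.sum_univ_two]; try ring)

lemma vecMul_M2 : vv ᵥ* M2 = vv := by
  funext j
  fin_cases j <;>
    (simp [vv, M2, Matrix.vecMul, dotProduct, Fin.sum_univ_two]; try ring)

/-- evaluation `y ↦ 1` -/
noncomputable def pY : Multiplicative (ℤ × ℤ) →* R2 :=
  (Units.coeHom R2).comp (U.comp (AddMonoidHom.toMultiplicative ((AddMonoidHom.fst ℤ ℤ).prod 0)))

noncomputable def phiY : R2 →ₐ[ℤ] R2 := (AddMonoidAlgebra.lift ℤ R2 (ℤ × ℤ)) pY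

/-- evaluation `x ↦ 1` -/
noncomputable def pX : Multiplicative (ℤ × ℤ) →* R2 :=
  (Units.coeHom R2).comp (U.comp (AddMonoidHom.toMultiplicative
    ((0 : (ℤ × ℤ) →+ ℤ).prod (AddMonoidHom.snd ℤ ℤ))))

noncomputable def phiX : R2 →ₐ[ℤ] R2 := (AddMonoidAlgebra.lift ℤ R2 (ℤ × ℤ)) pX

noncomputable def augA : R2 →ₐ[ℤ] ℤ := (AddMonoidAlgebra.lift ℤ ℤ (ℤ × ℤ)) 1

lemma phiY_Xr : phiY Xr = Xr := by
  have : Xr = (AddMonoidAlgebra.of ℤ (ℤ × ℤ)) (Multiplicative.ofAdd (1, 0)) := by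
    simp [Xr, xu, U]
  rw [this, phiY, AddMonoidAlgebra.lift_of]
  simp [pY, U, Xr, xu]

lemma phiY_Yr : phiY Yr = 1 := by
  have : Yr = (AddMonoidAlgebra.of ℤ (ℤ × ℤ)) (Multiplicative.ofAdd (0, 1)) := by
    simp [Yr, yu, U]
  rw [this, phiY, AddMonoidAlgebra.lift_of]
  simp [pY, U, AddMonoidAlgebra.one_def, Prod.mk_zero_zero]

lemma phiX_Yr : phiX Yr = Yr := by
  have : Yr = (AddMonoidAlgebra.of ℤ (ℤ × ℤ)) (Multiplicative.ofAdd (0, 1)) := by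
    simp [Yr, yu, U]
  rw [this, phiX, AddMonoidAlgebra.lift_of]
  simp [pX, U, Yr, yu]

lemma phiX_Xr : phiX Xr = 1 := by
  have : Xr = (AddMonoidAlgebra.of ℤ (ℤ × ℤ)) (Multiplicative.ofAdd (1, 0)) := by
    simp [Xr, xu, U]
  rw [this, phiX, AddMonoidAlgebra.lift_of]
  simp [pX, U, AddMonoidAlgebra.one_def, Prod.mk_zero_zero]

lemma aug_eq_augA (r : R2) : aug r = augA r := rfl

lemma augA_comp_phiY : augA.comp phiY = augA := by
  refine AddMonoidAlgebra.algHom_ext ?_ (Subsingleton.elim _ _)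
  intro g
  have hg : (AddMonoidAlgebra.single g 1 : R2)
      = (AddMonoidAlgebra.of ℤ (ℤ × ℤ)) (Multiplicative.ofAdd g) := by
    simp [AddMonoidAlgebra.of_apply]
  rw [hg]
  simp only [AlgHom.comp_apply, phiY, augA, AddMonoidAlgebra.lift_of]
  simp [pY, U]

lemma augA_comp_phiX : augA.comp phiX = augA := by
  refine AddMonoidAlgebra.algHom_ext ?_ (Subsingleton.elim _ _)
  intro g
  have hg : (AddMonoidAlgebra.single g 1 : R2)
      = (AddMonoidAlgebra.of ℤ (ℤ × ℤ)) (Multiplicative.ofAdd g) := by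
    simp [AddMonoidAlgebra.of_apply]
  rw [hg]
  simp only [AlgHom.comp_apply, phiX, augA, AddMonoidAlgebra.lift_of]
  simp [pX, U]

end Aux

/-- If `M = uI + N` lies in the commutator subgroup of `F(ℛ)`, then `u = 1` and
`λ₁(1-x) + λ₂(1-y) = 0`; consequently `λ₁, λ₂` lie in the augmentation ideal `Σ`. -/
theorem commutator_subgroup_form
    (m1 m2 : (Matrix (Fin 2) (Fin 2) R2)ˣ)
    (h1 : (m1 : Matrix (Fin 2) (Fin 2) R2) = M1)
    (h2 : (m2 : Matrix (Fin 2) (Fin 2) R2) = M2)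
    (M : (Matrix (Fin 2) (Fin 2) R2)ˣ)
    (hM : M ∈ ⁅Subgroup.closure {m1, m2}, Subgroup.closure {m1, m2}⁆)
    (u : R2ˣ) (l1 l2 : R2)
    (hform : (M : Matrix (Fin 2) (Fin 2) R2) =
      (u : R2) • (1 : Matrix (Fin 2) (Fin 2) R2) + Nmat l1 l2) :
    (u : R2) = 1 ∧ l1 * (1 - Xr) + l2 * (1 - Yr) = 0 ∧ l1 ∈ Saug ∧ l2 ∈ Saug := by
  set H := Subgroup.closure ({m1, m2} : Set (Matrix (Fin 2) (Fin 2) R2)ˣ) with hH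
  -- M lies in the closure itself
  have hHH : ⁅H, H⁆ ≤ H := by
    rw [Subgroup.commutator_le]
    intro g hg h hh
    rw [commutatorElement_def]
    exact mul_mem (mul_mem (mul_mem hg hh) (inv_mem hg)) (inv_mem hh)
  have hMH : M ∈ H := hHH hM
  -- v is fixed by everything in the closure
  have hv : ∀ g : (Matrix (Fin 2) (Fin 2) R2)ˣ, g ∈ H →
      vv ᵥ* (g : Matrix (Fin 2) (Fin 2) R2) = vv := by
    intro g hg
    induction hg using Subgroup.closure_induction with
    | mem x hx =>
        rcases hx with rfl | rfl
        · rw [h1]; exact vecMul_M1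
        · rw [h2]; exact vecMul_M2
    | one => simp
    | mul x y hx hy ihx ihy =>
        rw [Units.val_mul, ← Matrix.vecMul_vecMul, ihx, ihy]
    | inv x hx ih =>
        have : vv ᵥ* ((x : Matrix (Fin 2) (Fin 2) R2) * ((x⁻¹ : _ˣ) : Matrix (Fin 2) (Fin 2) R2))
            = vv := by
          rw [← Units.val_mul, mul_inv_cancel]; simp
        rw [← Matrix.vecMul_vecMul, ih] at this
        exact this
  have hvM : vv ᵥ* (M : Matrix (Fin 2) (Fin 2) R2) = vv := hv M hMH
  -- determinant of M is 1
  have hdet : (M : Matrix (Fin 2) (Fin 2) R2).det = 1 := by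
    set d : (Matrix (Fin 2) (Fin 2) R2)ˣ →* R2ˣ := Units.map (Matrix.detMonoidHom) with hd
    have hker : ⁅H, H⁆ ≤ d.ker := by
      rw [Subgroup.commutator_le]
      intro g _ h _
      rw [MonoidHom.mem_ker, map_commutatorElement,
        commutatorElement_eq_one_iff_mul_comm]
      exact mul_comm _ _
    have h1' : d M = 1 := hker hM
    have := congrArg (Units.val) h1'
    simpa [hd, Matrix.detMonoidHom] using this
  -- first consequence: u + s = 1
  set s : R2 := l1 * (1 - Xr) + l2 * (1 - Yr) with hs
  have e0 := congrFun (hform ▸ hvM) 0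
  simp [vv, Nmat, Matrix.vecMul, dotProduct, Fin.sum_univ_two,
    Matrix.add_apply, Matrix.smul_apply, Matrix.one_apply] at e0
  have key : ((u : R2) + s - 1) * (1 - Xr) = 0 := by
    rw [hs]; linear_combination e0
  have hus : (u : R2) + s = 1 := by
    rcases mul_eq_zero.mp key with h | h
    · linear_combination h
    · exact absurd h one_sub_Xr_ne
  -- second consequence from determinant
  rw [hform] at hdet
  simp [Matrix.det_fin_two, Nmat, Matrix.add_apply, Matrix.smul_apply,
    Matrix.one_apply] at hdet
  have hdet2 : (u : R2) * (u : R2) + (u : R2) * s = 1 := by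
    rw [hs]; linear_combination hdet
  have hu : (u : R2) = 1 := by linear_combination hdet2 - (u : R2) * hus
  have hs0 : s = 0 := by linear_combination hus - hu
  refine ⟨hu, hs0, ?_, ?_⟩
  · -- l1 ∈ Saug
    have h5 : phiY l1 * (1 - Xr) = 0 := by
      have := congrArg phiY hs0
      simp only [hs, map_add, _root_.map_mul, map_sub, _root_.map_one, phiY_Xr, phiY_Yr,
        sub_self, mul_zero, add_zero, map_zero] at this
      linear_combination this
    have h6 : phiY l1 = 0 := by
      rcases mul_eq_zero.mp h5 with h | h
      · exact h
      · exact absurd h one_sub_Xr_ne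
    have : aug l1 = 0 := by
      rw [aug_eq_augA, ← congrFun (congrArg DFunLike.coe augA_comp_phiY) l1,
        AlgHom.comp_apply, h6, map_zero]
    exact this
  · have h5 : phiX l2 * (1 - Yr) = 0 := by
      have := congrArg phiX hs0
      simp only [hs, map_add, _root_.map_mul, map_sub, _root_.map_one, phiX_Xr, phiX_Yr,
        sub_self, mul_zero, zero_add, map_zero] at this
      linear_combination this
    have h6 : phiX l2 = 0 := by
      rcases mul_eq_zero.mp h5 with h | h
      · exact h
      · exact absurd h one_sub_Yr_ne
    have : aug l2 = 0 := by
      rw [aug_eq_augA, ← congrFun (congrArg DFunLike.coe augA_comp_phiX) l2,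
        AlgHom.comp_apply, h6, map_zero]
    exact this
end

section
/- For a prime p, the p-cyclotomic element 1 + u + u² + ⋯ + u^{p-1} is congruent to (1-u)^{p-1} modulo p in ℛ for any unit u; consequently the (p-1)-st power of the augmentation ideal Σ^{p-1} is contained in the ideal generated by 𝒥(p) and pΣ, where 𝒥(p) is the p-cyclotomic ideal. -/
open Matrix Finset

open Pointwise

-- basic lemmas
lemma U_coe (m : Multiplicative (ℤ × ℤ)) :
    (U m : R2) = AddMonoidAlgebra.of ℤ (ℤ × ℤ) m := rfl

lemma aug_U (m : Multiplicative (ℤ × ℤ)) : aug (U m : R2) = 1 := by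
  rw [U_coe]
  show ((AddMonoidAlgebra.lift ℤ ℤ (ℤ × ℤ)) 1) (AddMonoidAlgebra.of ℤ (ℤ × ℤ) m) = 1
  simp [AddMonoidAlgebra.lift_of]

lemma aug_single (m : ℤ × ℤ) (c : ℤ) : aug (AddMonoidAlgebra.single m c) = c := by
  show ((AddMonoidAlgebra.lift ℤ ℤ (ℤ × ℤ)) 1) (AddMonoidAlgebra.single m c) = c
  simp [AddMonoidAlgebra.lift_single]

lemma U_pow_nat (m : Multiplicative (ℤ × ℤ)) (k : ℕ) : (U m : R2) ^ k = (U (m ^ k) : R2) := by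
  rw [map_pow]; rfl

lemma U_xk (k : ℕ) : (U (Multiplicative.ofAdd ((k : ℤ), 1)) : R2) = Xr ^ k * Yr := by
  have h : ((k : ℤ), (1 : ℤ)) = k • ((1:ℤ), (0:ℤ)) + ((0:ℤ), (1:ℤ)) := by
    simp [Prod.ext_iff]
  rw [h, ofAdd_add, _root_.map_mul, ofAdd_nsmul, _root_.map_pow]
  push_cast
  rfl

noncomputable def Iab : Ideal R2 := Ideal.span {1 - Xr, 1 - Yr}

lemma one_sub_mem_Iab (m : Multiplicative (ℤ × ℤ)) : 1 - (U m : R2) ∈ Iab := by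
  -- reduce to an AddSubgroup argument
  let S : AddSubgroup (ℤ × ℤ) :=
    { carrier := {m | 1 - (U (Multiplicative.ofAdd m) : R2) ∈ Iab}
      zero_mem' := by simp
      add_mem' := by
        intro a b ha hb
        simp only [Set.mem_setOf_eq] at *
        have h : (1 : R2) - (U (Multiplicative.ofAdd (a + b)) : R2) =
            (1 - (U (Multiplicative.ofAdd a) : R2)) +
            (U (Multiplicative.ofAdd a) : R2) * (1 - (U (Multiplicative.ofAdd b) : R2)) := by
          rw [ofAdd_add, _root_.map_mul]
          push_cast
          ring
        rw [h]
        exact Iab.add_mem ha (Iab.mul_mem_left _ hb)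
      neg_mem' := by
        intro a ha
        simp only [Set.mem_setOf_eq] at *
        have h : (1 : R2) - (U (Multiplicative.ofAdd (-a)) : R2) =
            -(U (Multiplicative.ofAdd (-a)) : R2) * (1 - (U (Multiplicative.ofAdd a) : R2)) := by
          have : (U (Multiplicative.ofAdd (-a)) : R2) * (U (Multiplicative.ofAdd a) : R2) = 1 := by
            rw [← Units.val_mul, ← _root_.map_mul, ← ofAdd_add, neg_add_cancel]
            rfl
          linear_combination -this
        rw [h]
        exact Iab.mul_mem_left _ ha }
  have hx : ((1:ℤ), (0:ℤ)) ∈ S := by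
    show 1 - (U (Multiplicative.ofAdd (1, 0)) : R2) ∈ Iab
    exact Ideal.subset_span (Or.inl rfl)
  have hy : ((0:ℤ), (1:ℤ)) ∈ S := by
    show 1 - (U (Multiplicative.ofAdd (0, 1)) : R2) ∈ Iab
    exact Ideal.subset_span (Or.inr rfl)
  have hall : ∀ q : ℤ × ℤ, q ∈ S := by
    intro ⟨i, j⟩
    have : (i, j) = i • ((1:ℤ), (0:ℤ)) + j • ((0:ℤ), (1:ℤ)) := by simp [Prod.ext_iff]
    rw [this]
    exact S.add_mem (S.zsmul_mem hx i) (S.zsmul_mem hy j)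
  exact hall (Multiplicative.toAdd m)

lemma aug_X : aug Xr = 1 := aug_U _
lemma aug_Y : aug Yr = 1 := aug_U _

lemma Saug_eq_Iab : Saug = Iab := by
  apply le_antisymm
  · intro f hf
    have hf0 : aug f = 0 := hf
    have hrep : f = ∑ m ∈ f.coeff.support, AddMonoidAlgebra.single m (f.coeff m) :=
      (AddMonoidAlgebra.sum_coeff_single f).symm
    have hsingle : ∀ m : ℤ × ℤ, ∀ c : ℤ,
        (AddMonoidAlgebra.single m c : R2) = c • ((U (Multiplicative.ofAdd m) : R2)) := by
      intro m c
      rw [U_coe]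
      show AddMonoidAlgebra.single m c = c • AddMonoidAlgebra.single m 1
      rw [AddMonoidAlgebra.smul_single', mul_one]
    have haug : aug f = ∑ m ∈ f.coeff.support, f.coeff m := by
      conv_lhs => rw [hrep]
      rw [map_sum]
      exact Finset.sum_congr rfl fun m _ => aug_single m (f.coeff m)
    have key : f = ∑ m ∈ f.coeff.support, (f.coeff m) • ((U (Multiplicative.ofAdd m) : R2) - 1) := by
      conv_lhs => rw [hrep]
      rw [Finset.sum_congr rfl fun m _ => hsingle m (f.coeff m)]
      have : ∑ m ∈ f.coeff.support, (f.coeff m) • ((U (Multiplicative.ofAdd m) : R2) - 1)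
          = (∑ m ∈ f.coeff.support, (f.coeff m) • ((U (Multiplicative.ofAdd m) : R2))) - (∑ m ∈ f.coeff.support, f.coeff m) • (1 : R2) := by
        rw [Finset.sum_smul, ← Finset.sum_sub_distrib]
        exact Finset.sum_congr rfl fun m _ => by rw [smul_sub]
      rw [this, ← haug, hf0, zero_smul, sub_zero]
    rw [key]
    exact sum_mem fun m _ => zsmul_mem (by simpa using Iab.neg_mem (one_sub_mem_Iab (Multiplicative.ofAdd m))) _
  · rw [Saug]
    apply Ideal.span_le.mpr
    rintro r (rfl | rfl) <;>
      simp [RingHom.mem_ker, map_sub, aug_X, aug_Y]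

lemma span_pair_pow {R : Type*} [CommRing R] (a b : R) (n : ℕ) :
    Ideal.span {a, b} ^ n ≤ Ideal.span {r | ∃ i ≤ n, r = a ^ i * b ^ (n - i)} := by
  induction n with
  | zero =>
    have : (1 : R) ∈ {r | ∃ i ≤ 0, r = a ^ i * b ^ (0 - i)} := ⟨0, le_refl 0, by simp⟩
    rw [pow_zero, Ideal.one_eq_top, ← Ideal.span_singleton_one]
    exact Ideal.span_le.mpr (fun r hr => Ideal.subset_span (hr ▸ this))
  | succ n ih =>
    rw [pow_succ]
    have h1 : Ideal.span ({a,b}:Set R) ^ n * Ideal.span {a, b}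
        ≤ Ideal.span {r | ∃ i ≤ n, r = a ^ i * b ^ (n - i)} * Ideal.span {a, b} :=
      Ideal.mul_mono_left ih
    have h2 : Ideal.span {r | ∃ i ≤ n, r = a ^ i * b ^ (n - i)} * Ideal.span ({a, b}:Set R)
        = Ideal.span ({r | ∃ i ≤ n, r = a ^ i * b ^ (n - i)} * ({a, b}:Set R)) :=
      Ideal.span_mul_span' _ _
    refine h1.trans (h2.le.trans (Ideal.span_mono ?_))
    rw [Set.mul_subset_iff]
    rintro x ⟨i, hi, rfl⟩ y (rfl | rfl)
    · exact ⟨i + 1, by omega, by rw [show n + 1 - (i + 1) = n - i from by omega, pow_succ]; ring⟩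
    · exact ⟨i, by omega, by rw [show n + 1 - i = (n - i) + 1 from by omega, pow_succ]; ring⟩

lemma pow_sub_pow_mem {R : Type*} [CommRing R] (I : Ideal R) (s e : R) (hs : s ∈ I) (he : e ∈ I ^ 2) (n : ℕ) :
    (s + e) ^ n - s ^ n ∈ I ^ (n + 1) := by
  induction n with
  | zero => simp
  | succ n ih =>
    have h1 : (s + e) ^ (n + 1) - s ^ (n + 1)
        = (s + e) * ((s + e) ^ n - s ^ n) + e * s ^ n := by ring
    rw [h1]
    apply Ideal.add_mem
    · have : (s + e) * ((s + e) ^ n - s ^ n) ∈ I * I ^ (n + 1) :=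
        Ideal.mul_mem_mul (I.add_mem hs (by
          have := Ideal.pow_le_self (n := 2) two_ne_zero (I := I)
          exact this he)) ih
      rwa [← pow_succ'] at this
    · have : e * s ^ n ∈ I ^ 2 * I ^ n := Ideal.mul_mem_mul he (Ideal.pow_mem_pow hs n)
      rwa [← pow_add, show 2 + n = n + 1 + 1 from by omega] at this

lemma geom_helper (t : ℕ) : 1 - Xr ^ t = (∑ s ∈ range t, Xr ^ s) * (1 - Xr) := by
  have := geom_sum_mul Xr t
  linear_combination this

lemma one_sub_X_pow_mem (t : ℕ) : 1 - Xr ^ t ∈ Iab := by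
  rw [geom_helper]
  exact Iab.mul_mem_left _ (Ideal.subset_span (Or.inl rfl))

lemma eps_mem (k : ℕ) :
    (1 - Xr ^ k * Yr) - ((k : R2) * (1 - Xr) + (1 - Yr)) ∈ Iab ^ 2 := by
  have hid : (1 - Xr ^ k * Yr) - ((k : R2) * (1 - Xr) + (1 - Yr))
      = -((∑ s ∈ range k, (1 - Xr ^ s)) * (1 - Xr))
        - (∑ s ∈ range k, Xr ^ s) * ((1 - Xr) * (1 - Yr)) := by
    have h1 : ∑ s ∈ range k, (1 - Xr ^ s) = (k : R2) - ∑ s ∈ range k, Xr ^ s := by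
      rw [Finset.sum_sub_distrib, Finset.sum_const, card_range, nsmul_eq_mul, mul_one]
    rw [h1]
    have h2 := geom_helper k
    linear_combination Yr * h2
  rw [hid]
  apply Ideal.sub_mem
  · apply neg_mem
    rw [sq]
    exact Ideal.mul_mem_mul (sum_mem fun s _ => one_sub_X_pow_mem s)
      (Ideal.subset_span (Or.inl rfl))
  · apply Ideal.mul_mem_left
    rw [sq]
    exact Ideal.mul_mem_mul (Ideal.subset_span (Or.inl rfl)) (Ideal.subset_span (Or.inr rfl))

open Polynomial in
lemma dvd_of_map_zero (p : ℕ) (f : ℤ[X]) (h : f.map (Int.castRingHom (ZMod p)) = 0) :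
    ((p : ℕ) : ℤ[X]) ∣ f := by
  rw [← Polynomial.C_eq_natCast, Polynomial.C_dvd_iff_dvd_coeff]
  intro n
  have h' := congrArg (fun q => Polynomial.coeff q n) h
  simp only [Polynomial.coeff_map, Polynomial.coeff_zero, Int.coe_castRingHom] at h'
  exact_mod_cast (ZMod.intCast_zmod_eq_zero_iff_dvd _ p).mp h'

open Polynomial in
lemma key_poly (p : ℕ) (hp : p.Prime) :
    ((p : ℕ) : ℤ[X]) ∣ (∑ i ∈ range p, X ^ i) - (1 - X) ^ (p - 1) := by
  haveI : Fact p.Prime := ⟨hp⟩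
  apply dvd_of_map_zero
  push_cast [Polynomial.map_sub, Polynomial.map_pow, Polynomial.map_sum, Polynomial.map_one,
    Polynomial.map_X]
  have hx : (1 - (X : (ZMod p)[X])) ≠ 0 := by
    intro h
    have := congrArg (fun q => Polynomial.coeff q 1) h
    simp [Polynomial.coeff_one] at this
  apply mul_left_cancel₀ hx
  rw [mul_zero, mul_sub]
  have h1 : (1 - (X : (ZMod p)[X])) * ∑ i ∈ range p, X ^ i = 1 - X ^ p := by
    have := geom_sum_mul (X : (ZMod p)[X]) p
    linear_combination -this
  have h2 : (1 - (X : (ZMod p)[X])) * (1 - X) ^ (p - 1) = (1 - X) ^ p := by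
    rw [← pow_succ', Nat.sub_add_cancel hp.one_lt.le]
  rw [h1, h2, sub_pow_char, one_pow]
  ring

open Polynomial in
lemma key_poly2 (p : ℕ) (hp : p.Prime) :
    ((p : ℕ) : ℤ[X]) ∣ (1 - X) ^ p - (1 - X ^ p) := by
  haveI : Fact p.Prime := ⟨hp⟩
  apply dvd_of_map_zero
  push_cast [Polynomial.map_sub, Polynomial.map_pow, Polynomial.map_one, Polynomial.map_X]
  rw [sub_pow_char, one_pow, sub_self]

lemma part1 (p : ℕ) (hp : p.Prime) (u : R2) :
    (∑ i ∈ range p, u ^ i) - (1 - u) ^ (p - 1) ∈ Ideal.span {(p : R2)} := by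
  rw [Ideal.mem_span_singleton]
  obtain ⟨g, hg⟩ := key_poly p hp
  have h := congrArg (Polynomial.aeval u) hg
  simp only [map_sub, map_sum, map_pow, _root_.map_mul, _root_.map_one, Polynomial.aeval_X,
    map_natCast] at h
  exact ⟨Polynomial.aeval u g, h⟩

noncomputable def Kp (p : ℕ) : Ideal R2 := Cyc p ⊔ Ideal.span {(p : R2)} * Saug

lemma geom_mem_Cyc (p : ℕ) (m : Multiplicative (ℤ × ℤ)) :
    ∑ i ∈ range p, (U m : R2) ^ i ∈ Cyc p := Ideal.subset_span ⟨m, rfl⟩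

lemma p_mem_Cyc (p : ℕ) : ((p : ℕ) : R2) ∈ Cyc p := by
  have h := geom_mem_Cyc p 1
  simpa using h

lemma pSaug_mem (p : ℕ) (c : R2) (hc : aug c = 0) :
    ((p : ℕ) : R2) * c ∈ Ideal.span {(p : R2)} * Saug :=
  Ideal.mul_mem_mul (Ideal.subset_span rfl) hc

lemma aug_geom (p : ℕ) (m : Multiplicative (ℤ × ℤ)) :
    aug (∑ i ∈ range p, (U m : R2) ^ i) = p := by
  rw [map_sum]
  simp [map_pow, aug_U]

lemma one_sub_pow_mem_Kp (p : ℕ) (hp : p.Prime) (m : Multiplicative (ℤ × ℤ)) :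
    (1 - (U m : R2)) ^ (p - 1) ∈ Kp p := by
  set u : R2 := (U m : R2) with hu
  obtain ⟨c, hc⟩ := Ideal.mem_span_singleton.mp (part1 p hp u)
  have hp0 : (p : ℤ) ≠ 0 := by exact_mod_cast hp.ne_zero
  have haugc : aug c = 1 := by
    have h := congrArg aug hc
    rw [map_sub, aug_geom p m, map_pow, map_sub, _root_.map_one, aug_U, sub_self,
      zero_pow (Nat.sub_ne_zero_of_lt hp.one_lt), sub_zero, _root_.map_mul,
      _root_.map_natCast] at h
    exact mul_left_cancel₀ hp0 (h.symm.trans (mul_one (p:ℤ)).symm)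
  have hid : (1 - u) ^ (p - 1)
      = ((∑ i ∈ range p, u ^ i) - (p : R2)) - (p : R2) * (c - 1) := by
    linear_combination -hc
  rw [hid]
  apply Submodule.sub_mem
  · exact Ideal.mem_sup_left (Ideal.sub_mem _ (geom_mem_Cyc p m) (p_mem_Cyc p))
  · exact Ideal.mem_sup_right (pSaug_mem p _
      (by rw [map_sub, haugc, _root_.map_one, sub_self]))

lemma one_sub_pow_p_mem_Kp (p : ℕ) (hp : p.Prime) (m : Multiplicative (ℤ × ℤ)) :
    (1 - (U m : R2)) ^ p ∈ Kp p := by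
  set u : R2 := (U m : R2) with hu
  obtain ⟨g, hg⟩ := key_poly2 p hp
  have h := congrArg (Polynomial.aeval u) hg
  simp only [map_sub, map_pow, _root_.map_mul, _root_.map_one, Polynomial.aeval_X,
    map_natCast] at h
  have hp0 : (p : ℤ) ≠ 0 := by exact_mod_cast hp.ne_zero
  have haugg : aug (Polynomial.aeval u g : R2) = 0 := by
    have h2 := congrArg aug h
    rw [map_sub, map_pow, map_sub, _root_.map_one, aug_U, sub_self,
      zero_pow hp.ne_zero, map_sub, _root_.map_one, map_pow, aug_U, one_pow, sub_self, sub_self,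
      _root_.map_mul, _root_.map_natCast] at h2
    exact (mul_eq_zero.mp h2.symm).resolve_left hp0
  have hgeom : 1 - u ^ p = (∑ i ∈ range p, u ^ i) * (1 - u) := by
    have := geom_sum_mul u p
    linear_combination this
  have hid : (1 - u) ^ p = (∑ i ∈ range p, u ^ i) * (1 - u)
      + (p : R2) * (Polynomial.aeval u g : R2) := by
    rw [← hgeom]; linear_combination h
  rw [hid]
  apply Submodule.add_mem
  · exact Ideal.mem_sup_left (Ideal.mul_mem_right _ _ (geom_mem_Cyc p m))
  · exact Ideal.mem_sup_right (pSaug_mem p _ haugg)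

lemma choose_not_dvd (p : ℕ) (hp : p.Prime) (i : ℕ) (hi : i ≤ p - 1) :
    ¬ (p ∣ (p-1).choose i) := by
  intro hdvd
  have h1 := Nat.choose_mul_factorial_mul_factorial hi
  have h2 : p ∣ Nat.factorial (p-1) := by
    rw [← h1]; exact Dvd.dvd.mul_right (Dvd.dvd.mul_right hdvd _) _
  have h3 := (Nat.Prime.dvd_factorial hp).mp h2
  have := hp.one_lt
  omega

lemma det_not_dvd (p : ℕ) (hp : p.Prime) :
    ¬ ((p : ℤ) ∣ (Matrix.vandermonde (fun k : Fin p => (k : ℤ)) *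
        Matrix.diagonal (fun i : Fin p => ((p-1).choose i : ℤ))).det) := by
  intro hdvd
  have hprime : Prime (p : ℤ) := Nat.prime_iff_prime_int.mp hp
  rw [Matrix.det_mul, Matrix.det_diagonal, Matrix.det_vandermonde] at hdvd
  rcases (hprime.dvd_mul).mp hdvd with h | h
  · obtain ⟨i, -, h⟩ := (hprime.dvd_finset_prod_iff _).mp h
    obtain ⟨j, hj, h⟩ := (hprime.dvd_finset_prod_iff _).mp h
    rw [Finset.mem_Ioi] at hj
    have hji : (i : ℕ) < (j : ℕ) := hj
    have hlt : (j : ℤ) - (i : ℤ) < p := by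
      have := j.isLt; omega
    have hpos : (0 : ℤ) < (j : ℤ) - (i : ℤ) := by omega
    have := Int.le_of_dvd hpos h
    omega
  · obtain ⟨i, -, h⟩ := (hprime.dvd_finset_prod_iff _).mp h
    have : p ∣ (p-1).choose i := by exact_mod_cast h
    exact choose_not_dvd p hp i (by have := i.isLt; omega) this
-- abstract Vandermonde combination in a commutative ring T with ℤ-coefficients
lemma vand_comb {T : Type*} [CommRing T] {n : ℕ} (V : Matrix (Fin n) (Fin n) ℤ)
    (mv wv : Fin n → T) (hw : ∀ k, wv k = ∑ j : Fin n, ((V k j : ℤ) : T) * mv j) (i : Fin n) :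
    ((V.det : ℤ) : T) * mv i = ∑ k : Fin n, ((V.adjugate i k : ℤ) : T) * wv k := by
  have h1 : ∑ k : Fin n, ((V.adjugate i k : ℤ) : T) * wv k
      = ∑ j : Fin n, (((V.adjugate * V) i j : ℤ) : T) * mv j := by
    simp_rw [hw, Finset.mul_sum, ← mul_assoc]
    rw [Finset.sum_comm]
    congr 1
    ext j
    rw [← Finset.sum_mul, Matrix.mul_apply]
    push_cast
    ring
  rw [h1, Matrix.adjugate_mul]
  rw [Finset.sum_eq_single i]
  · simp
  · intro j _ hji
    simp [Matrix.one_apply, hji.symm]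
  · simp

lemma wv_expand {T : Type*} [CommRing T] (a b : T) (p : ℕ) (hp : p.Prime) (k : ℕ) :
    ((k : T) * a + b) ^ (p - 1)
      = ∑ i : Fin p, ((((p-1).choose i * (k:ℤ)^(i:ℕ) : ℤ)) : T) * (a^(i:ℕ) * b^(p-1-(i:ℕ))) := by
  rw [add_pow]
  rw [show p - 1 + 1 = p from Nat.sub_add_cancel hp.one_lt.le]
  rw [← Fin.sum_univ_eq_sum_range (fun i => ((k:T)*a)^i * b^(p-1-i) * ((p-1).choose i : T)) p]
  congr 1
  ext i
  push_cast
  ring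

lemma aug_monomial (i j : ℕ) (hij : 1 ≤ i + j) : aug ((1 - Xr)^i * (1 - Yr)^j) = 0 := by
  rw [_root_.map_mul, map_pow, map_pow, map_sub, map_sub, _root_.map_one, aug_X, aug_Y,
    sub_self]
  rcases Nat.eq_zero_or_pos i with hi | hi
  · have hj : j ≠ 0 := by omega
    rw [zero_pow hj, mul_zero]
  · rw [zero_pow (by omega : i ≠ 0), zero_mul]

lemma monomial_mem_Iab (i j : ℕ) (hij : 1 ≤ i + j) : (1 - Xr)^i * (1 - Yr)^j ∈ Iab := by
  have ha : 1 - Xr ∈ Iab := Ideal.subset_span (Or.inl rfl)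
  have hb : 1 - Yr ∈ Iab := Ideal.subset_span (Or.inr rfl)
  rcases Nat.eq_zero_or_pos i with hi | hi
  · subst hi
    have hj : j = (j - 1) + 1 := by omega
    rw [hj, pow_succ]
    exact Iab.mul_mem_left _ (Iab.mul_mem_left _ hb)
  · have : i = (i - 1) + 1 := by omega
    rw [this, pow_succ]
    exact Iab.mul_mem_right _ (Iab.mul_mem_left _ ha)

lemma monomial_mem (p : ℕ) (hp : p.Prime) (i j : ℕ) (hij : i + j = p - 1) :
    (1 - Xr)^i * (1 - Yr)^j ∈ Kp p ⊔ Iab ^ p := by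
  have hp1 : 1 ≤ p - 1 := by have := hp.one_lt; omega
  set a : R2 := 1 - Xr with hadef
  set b : R2 := 1 - Yr with hbdef
  have ha : a ∈ Iab := Ideal.subset_span (Or.inl rfl)
  have hb : b ∈ Iab := Ideal.subset_span (Or.inr rfl)
  have hwmem : ∀ k : ℕ, ((k : R2) * a + b)^(p-1) ∈ Kp p ⊔ Iab ^ p := by
    intro k
    have hs : (k : R2) * a + b ∈ Iab := Iab.add_mem (Iab.mul_mem_left _ ha) hb
    have he := eps_mem k
    have h1 : (1 - (U (Multiplicative.ofAdd ((k:ℤ), 1)) : R2))^(p-1) ∈ Kp p :=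
      one_sub_pow_mem_Kp p hp _
    have hUk : (1 - (U (Multiplicative.ofAdd ((k:ℤ), 1)) : R2))
        = ((k:R2)*a + b) + ((1 - Xr^k*Yr) - ((k:R2)*a + b)) := by
      rw [U_xk]; ring
    rw [hUk] at h1
    have h2 := pow_sub_pow_mem Iab _ _ hs he (p-1)
    rw [Nat.sub_add_cancel hp.one_lt.le] at h2
    have hid : ((k:R2)*a + b)^(p-1)
        = (((k:R2)*a + b) + ((1 - Xr^k*Yr) - ((k:R2)*a + b)))^(p-1)
          - ((((k:R2)*a + b) + ((1 - Xr^k*Yr) - ((k:R2)*a + b)))^(p-1) - ((k:R2)*a + b)^(p-1)) := by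
      ring
    rw [hid]
    exact Submodule.sub_mem _ (Ideal.mem_sup_left h1) (Ideal.mem_sup_right h2)
  set V := (Matrix.vandermonde (fun k : Fin p => (k : ℤ)) *
    Matrix.diagonal (fun l : Fin p => ((p-1).choose l : ℤ))) with hVdef
  have hVapp : ∀ k l : Fin p, V k l = ((p-1).choose l : ℤ) * (k:ℤ)^(l:ℕ) := by
    intro k l
    rw [hVdef, Matrix.mul_diagonal, Matrix.vandermonde_apply]
    ring
  have hip : i < p := by omega
  have hcomb := vand_comb V (fun l : Fin p => a^(l:ℕ) * b^(p-1-(l:ℕ)))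
    (fun k : Fin p => (((k:ℕ):R2)*a + b)^(p-1))
    (fun k => by
      show (((k:ℕ):R2)*a + b)^(p-1)
          = ∑ l : Fin p, ((V k l : ℤ) : R2) * (a^(l:ℕ) * b^(p-1-(l:ℕ)))
      rw [wv_expand a b p hp (k:ℕ)]
      exact Finset.sum_congr rfl fun l _ => by rw [hVapp])
    ⟨i, hip⟩
  have hji : p - 1 - i = j := by omega
  simp only [hji] at hcomb
  have hdm : ((V.det : ℤ) : R2) * (a^i * b^j) ∈ Kp p ⊔ Iab ^ p := by
    rw [hcomb]
    exact sum_mem fun k _ => Ideal.mul_mem_left _ _ (hwmem (k:ℕ))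
  have hd := det_not_dvd p hp
  have hcop : IsCoprime ((p:ℤ)) V.det :=
    (Nat.prime_iff_prime_int.mp hp).coprime_iff_not_dvd.mpr hd
  obtain ⟨α, β, hαβ⟩ := hcop.symm
  have hpm : ((p:ℕ):R2) * (a^i * b^j) ∈ Kp p :=
    Ideal.mem_sup_right (pSaug_mem p _ (aug_monomial i j (by omega)))
  have hsplit : a^i * b^j = (α : R2) * (((V.det : ℤ) : R2) * (a^i * b^j))
      + (β : R2) * (((p:ℕ):R2) * (a^i * b^j)) := by
    have hc := congrArg (fun z : ℤ => ((z : R2))) hαβ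
    simp only [Int.cast_add, Int.cast_mul, Int.cast_one, Int.cast_natCast] at hc
    linear_combination (-(a^i * b^j)) * hc
  rw [hsplit]
  exact Submodule.add_mem _ (Ideal.mul_mem_left _ _ hdm)
    (Ideal.mul_mem_left _ _ (Ideal.mem_sup_left hpm))

lemma Xr_eq : (U (Multiplicative.ofAdd ((1:ℤ), (0:ℤ))) : R2) = Xr := rfl
lemma Yr_eq : (U (Multiplicative.ofAdd ((0:ℤ), (1:ℤ))) : R2) = Yr := rfl

lemma Iab_big_le (p : ℕ) (hp : p.Prime) : Iab ^ (2*p-1) ≤ Kp p := by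
  have hX : (1 - Xr) ^ p ∈ Kp p := by
    have := one_sub_pow_p_mem_Kp p hp (Multiplicative.ofAdd ((1:ℤ), (0:ℤ)))
    rwa [Xr_eq] at this
  have hY : (1 - Yr) ^ p ∈ Kp p := by
    have := one_sub_pow_p_mem_Kp p hp (Multiplicative.ofAdd ((0:ℤ), (1:ℤ)))
    rwa [Yr_eq] at this
  refine le_trans (span_pair_pow (1 - Xr) (1 - Yr) (2*p-1)) (Ideal.span_le.mpr ?_)
  rintro r ⟨i, hi, rfl⟩
  have hplt := hp.one_lt
  rcases le_or_gt p i with hcase | hcase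
  · rw [show i = p + (i - p) from by omega, pow_add, mul_assoc]
    exact Ideal.mul_mem_right _ _ hX
  · have hj : 2*p-1-i = p + (2*p-1-i-p) := by omega
    rw [hj, pow_add, ← mul_assoc, mul_comm ((1-Xr)^i), mul_assoc]
    exact Ideal.mul_mem_right _ _ hY

lemma Iab_step (p : ℕ) (hp : p.Prime) (t : ℕ) :
    Iab ^ (p-1+t) ≤ Kp p ⊔ Iab ^ (p+t) := by
  have hbase : Iab ^ (p-1) ≤ Kp p ⊔ Iab ^ p := by
    refine le_trans (span_pair_pow (1 - Xr) (1 - Yr) (p-1)) (Ideal.span_le.mpr ?_)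
    rintro r ⟨i, hi, rfl⟩
    exact monomial_mem p hp i (p-1-i) (by omega)
  calc Iab ^ (p-1+t) = Iab ^ (p-1) * Iab ^ t := by rw [pow_add]
    _ ≤ (Kp p ⊔ Iab ^ p) * Iab ^ t := Ideal.mul_mono_left hbase
    _ = Kp p * Iab ^ t ⊔ Iab ^ p * Iab ^ t := Ideal.sup_mul _ _ _
    _ ≤ Kp p ⊔ Iab ^ (p+t) := by
        apply sup_le_sup
        · exact Ideal.mul_le.2 fun _ hr _ _ => Ideal.mul_mem_right _ _ hr
        · rw [← pow_add]

lemma Iab_pow_le (p : ℕ) (hp : p.Prime) : Iab ^ (p-1) ≤ Kp p := by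
  have hG : ∀ t : ℕ, Iab ^ (p-1) ≤ Kp p ⊔ Iab ^ (p-1+t) := by
    intro t
    induction t with
    | zero => exact le_sup_right
    | succ t ih =>
      refine ih.trans ?_
      have h := Iab_step p hp t
      have : Kp p ⊔ Iab ^ (p-1+t) ≤ Kp p ⊔ (Kp p ⊔ Iab ^ (p+t)) := sup_le_sup_left h _
      rw [← sup_assoc, sup_idem] at this
      rwa [show p-1+(t+1) = p+t from by have := hp.one_lt; omega]
  have h := hG p
  rw [show p-1+p = 2*p-1 from by have := hp.one_lt; omega] at h
  exact h.trans (sup_le (le_refl _) (Iab_big_le p hp))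

/-- For a prime `p`, the `p`-cyclotomic element `1 + u + ⋯ + u^(p-1)` is congruent to
`(1-u)^(p-1)` modulo `p` for any unit `u`; consequently
`Σ^(p-1) ⊆ 𝒥(p) + pΣ`. -/
theorem cyclotomic_mod_p (p : ℕ) (hp : p.Prime) :
    (∀ u : R2, IsUnit u →
      (∑ i ∈ Finset.range p, u ^ i) - (1 - u) ^ (p - 1) ∈ Ideal.span {(p : R2)}) ∧
    Saug ^ (p - 1) ≤ Cyc p ⊔ Ideal.span {(p : R2)} * Saug := by
  constructor
  · exact fun u _ => part1 p hp u
  · have h : Saug ^ (p - 1) ≤ Kp p := by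
      rw [Saug_eq_Iab]; exact Iab_pow_le p hp
    exact h
end
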